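/- Fix p > 1. Suppose there exists x ∈ C^{1/p}([0,1]) with linear dyadic p-th variation [x]^{(p)}_𝕋(t) = C_p·t for some constant C_p > 0. Let h ∈ C^1([0,1]) be non-decreasing with h(0) = 0 and suppose g := (h'/C_p)^{1/p} has vanishing dyadic p-th variation, [g]^{(p)}_𝕋 ≡ 0. Then y := g·x belongs to V^p_𝕋 and [y]^{(p)}_𝕋(t) = h(t) for all t ∈ [0,1]. -/

import Mathlib

open Set Finset Topology Filter


/-- Discrete p-th variation of `x` along the n-th dyadic partition, stopped at `t`. -/
noncomputable def dyadicPVar (p : ℝ) (x : ℝ → ℝ) (n : ℕ) (t : ℝ) : ℝ :=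
  ∑ j ∈ Finset.range (2 ^ n),
    |x (min (((j : ℝ) + 1) / 2 ^ n) t) - x (min ((j : ℝ) / 2 ^ n) t)| ^ p

lemma rpow_sub_rpow_le' {p : ℝ} (hp : 1 ≤ p) {v u : ℝ} (hv : 0 ≤ v) (hvu : v ≤ u) :
    u ^ p - v ^ p ≤ p * u ^ (p - 1) * (u - v) := by
  rcases eq_or_lt_of_le hvu with rfl | hlt
  · simp
  have hcont : ContinuousOn (fun c : ℝ => c ^ p) (Set.Icc v u) := fun c _ =>
    ((Real.hasDerivAt_rpow_const (p := p) (Or.inr hp)).continuousAt).continuousWithinAt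
  obtain ⟨c, hc, hslope⟩ := exists_hasDerivAt_eq_slope (fun c => c ^ p)
    (fun c => p * c ^ (p - 1)) hlt hcont
    (fun c _ => Real.hasDerivAt_rpow_const (Or.inr hp))
  have h1 : u ^ p - v ^ p = p * c ^ (p - 1) * (u - v) := by
    rw [hslope, div_mul_cancel₀ _ (by linarith : u - v ≠ 0)]
  rw [h1]
  have hc0 : 0 ≤ c := hv.trans hc.1.le
  have hcu : c ^ (p - 1) ≤ u ^ (p - 1) := Real.rpow_le_rpow hc0 hc.2.le (by linarith)
  have hp0 : (0:ℝ) ≤ p := by linarith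
  have huv : (0:ℝ) ≤ u - v := by linarith
  calc p * c ^ (p-1) * (u - v) ≤ p * u ^ (p-1) * (u - v) := by
        apply mul_le_mul_of_nonneg_right (mul_le_mul_of_nonneg_left hcu hp0) huv
    _ = p * u ^ (p-1) * (u - v) := rfl

lemma abs_rpow_sub_abs_rpow_le {p : ℝ} (hp : 1 ≤ p) (a b : ℝ) :
    |(|a + b|) ^ p - (|a|) ^ p| ≤ p * (|a| + |b|) ^ (p - 1) * |b| := by
  have key : ∀ v u : ℝ, 0 ≤ v → v ≤ u → u ≤ |a| + |b| → u - v ≤ |b| →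
      u ^ p - v ^ p ≤ p * (|a| + |b|) ^ (p - 1) * |b| := by
    intro v u hv hvu hub hd
    calc u ^ p - v ^ p ≤ p * u ^ (p - 1) * (u - v) := rpow_sub_rpow_le' hp hv hvu
      _ ≤ p * (|a| + |b|) ^ (p - 1) * |b| := by
          have h1 : u ^ (p-1) ≤ (|a| + |b|) ^ (p-1) :=
            Real.rpow_le_rpow (hv.trans hvu) hub (by linarith)
          have hp0 : (0:ℝ) ≤ p := by linarith
          have h2 : (0:ℝ) ≤ u ^ (p-1) := Real.rpow_nonneg (hv.trans hvu) _
          have h3 : (0:ℝ) ≤ u - v := sub_nonneg.2 hvu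
          calc p * u ^ (p-1) * (u - v) ≤ p * (|a| + |b|) ^ (p-1) * (u - v) :=
                mul_le_mul_of_nonneg_right (mul_le_mul_of_nonneg_left h1 hp0) h3
            _ ≤ p * (|a| + |b|) ^ (p-1) * |b| := by
                apply mul_le_mul_of_nonneg_left hd
                exact mul_nonneg hp0 (h2.trans h1)
  rcases le_total (|a|) (|a + b|) with hle | hle
  · rw [abs_of_nonneg (sub_nonneg.2 (Real.rpow_le_rpow (abs_nonneg a) hle (by linarith)))]
    exact key _ _ (abs_nonneg a) hle (abs_add_le a b) (by
      have := abs_sub_abs_le_abs_sub (a + b) a; simp at this; linarith)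
  · rw [abs_of_nonpos (sub_nonpos.2 (Real.rpow_le_rpow (abs_nonneg _) hle (by linarith))), neg_sub]
    exact key _ _ (abs_nonneg _) hle (by
        have := abs_add_le a b; linarith [abs_nonneg b])
      (by have := abs_sub_abs_le_abs_sub a (a + b); simp at this; linarith)

lemma sum_range_mul_sum {M : Type*} [AddCommMonoid M] (f : ℕ → M) (K L : ℕ) :
    ∑ j ∈ Finset.range (K * L), f j
      = ∑ k ∈ Finset.range K, ∑ r ∈ Finset.range L, f (k * L + r) := by
  induction K with
  | zero => simp
  | succ K ih =>
    rw [Finset.sum_range_succ, ← ih, Nat.succ_mul, Finset.sum_range_add]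

lemma min_min_of_le {a c t : ℝ} (h : a ≤ c) : min a (min c t) = min a t := by
  rw [← min_assoc, min_eq_left h]

lemma min_min_of_ge {a c t : ℝ} (h : c ≤ a) : min a (min c t) = min c t :=
  min_eq_right (le_trans (min_le_left c t) h)

lemma dyadicPVar_min_eq (p : ℝ) (hp : 0 < p) (x : ℝ → ℝ) {t : ℝ}
    {m n k : ℕ} (hmn : m ≤ n) (hk : k ≤ 2 ^ m) :
    dyadicPVar p x n (min ((k : ℝ) / 2 ^ m) t)
      = ∑ j ∈ Finset.range (k * 2 ^ (n - m)),
          |x (min (((j : ℝ) + 1) / 2 ^ n) t) - x (min ((j : ℝ) / 2 ^ n) t)| ^ p := by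
  have h2 : ((2:ℝ)) ^ n = 2 ^ m * 2 ^ (n - m) := by
    rw [← pow_add]; congr 1; omega
  have hcast : ((k:ℝ)) / 2 ^ m = ((k * 2 ^ (n - m) : ℕ) : ℝ) / 2 ^ n := by
    push_cast; rw [h2]; field_simp
  have hsub : k * 2 ^ (n - m) ≤ 2 ^ n := by
    calc k * 2 ^ (n - m) ≤ 2 ^ m * 2 ^ (n - m) := Nat.mul_le_mul_right _ hk
      _ = 2 ^ n := by rw [← pow_add]; congr 1; omega
  unfold dyadicPVar
  rw [← Finset.sum_subset (Finset.range_subset_range.2 hsub)]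
  · apply Finset.sum_congr rfl
    intro j hj
    have hj' : (j : ℝ) + 1 ≤ (k * 2 ^ (n - m) : ℕ) := by
      have : j + 1 ≤ k * 2 ^ (n - m) := Finset.mem_range.1 hj
      exact_mod_cast this
    have h1 : ((j:ℝ) + 1) / 2 ^ n ≤ (k : ℝ) / 2 ^ m := by
      rw [hcast]; apply div_le_div_of_nonneg_right hj' (by positivity) |>.trans_eq rfl
    have h0 : (j:ℝ) / 2 ^ n ≤ (k : ℝ) / 2 ^ m := le_trans (by
      apply div_le_div_of_nonneg_right _ (by positivity); linarith) h1
    rw [min_min_of_le h1, min_min_of_le h0]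
  · intro j hjn hj
    have hj' : ((k * 2 ^ (n - m) : ℕ) : ℝ) ≤ (j : ℝ) := by
      have : k * 2 ^ (n - m) ≤ j := by
        by_contra hc; exact hj (Finset.mem_range.2 (by omega))
      exact_mod_cast this
    have h0 : (k : ℝ) / 2 ^ m ≤ (j:ℝ) / 2 ^ n := by
      rw [hcast]; exact div_le_div_of_nonneg_right hj' (by positivity)
    have h1 : (k : ℝ) / 2 ^ m ≤ ((j:ℝ) + 1) / 2 ^ n := h0.trans (by
      apply div_le_div_of_nonneg_right _ (by positivity); linarith)
    rw [min_min_of_ge h1, min_min_of_ge h0, sub_self, abs_zero,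
      Real.zero_rpow (ne_of_gt hp)]


lemma deriv_nonneg_of_monotoneOn {h : ℝ → ℝ} {d : ℝ} (hmono : MonotoneOn h (Set.Icc 0 1))
    {t : ℝ} (ht : t ∈ Set.Icc (0:ℝ) 1) (hd : HasDerivWithinAt h d (Set.Icc 0 1) t) :
    0 ≤ d := by
  have hslope := hasDerivWithinAt_iff_tendsto_slope.1 hd
  rcases lt_or_eq_of_le ht.2 with h1 | h1
  · have hsub : Set.Ioo t 1 ⊆ Set.Icc 0 1 \ {t} := fun u hu =>
      ⟨⟨le_trans ht.1 hu.1.le, hu.2.le⟩, ne_of_gt hu.1⟩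
    have := hslope.mono_left (nhdsWithin_mono t hsub)
    haveI hne : (𝓝[Set.Ioo t 1] t).NeBot := left_nhdsWithin_Ioo_neBot h1
    refine ge_of_tendsto this ?_
    filter_upwards [self_mem_nhdsWithin] with u hu
    have hmo := hmono ht ⟨le_trans ht.1 hu.1.le, hu.2.le⟩ hu.1.le
    rw [slope_def_field]
    exact div_nonneg (sub_nonneg.2 hmo) (by linarith [hu.1])
  · subst h1
    have h0 : (0:ℝ) < 1 := one_pos
    have hsub : Set.Ioo (0:ℝ) 1 ⊆ Set.Icc 0 1 \ {1} := fun u hu =>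
      ⟨⟨hu.1.le, hu.2.le⟩, ne_of_lt hu.2⟩
    have := hslope.mono_left (nhdsWithin_mono 1 hsub)
    haveI hne : (𝓝[Set.Ioo (0:ℝ) 1] 1).NeBot := right_nhdsWithin_Ioo_neBot h0
    refine ge_of_tendsto this ?_
    filter_upwards [self_mem_nhdsWithin] with u hu
    have hle := hmono ⟨hu.1.le, hu.2.le⟩ ht hu.2.le
    have h2 : u - 1 < 0 := by linarith [hu.2]
    rw [slope_def_field]
    rw [div_nonneg_iff]
    right
    exact ⟨by linarith, h2.le⟩

lemma block_mvt {h h' : ℝ → ℝ}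
    (hderiv : ∀ t ∈ Set.Icc (0:ℝ) 1, HasDerivWithinAt h (h' t) (Set.Icc 0 1) t)
    {a b c ε : ℝ} (ha : 0 ≤ a) (hab : a ≤ b) (hb : b ≤ 1)
    (hc : ∀ ξ ∈ Set.Ioo a b, |h' ξ - h' c| ≤ ε) :
    |h b - h a - h' c * (b - a)| ≤ ε * (b - a) := by
  rcases eq_or_lt_of_le hab with rfl | hlt
  · simp
  have hcont : ContinuousOn h (Set.Icc a b) := fun u hu =>
    ((hderiv u ⟨le_trans ha hu.1, le_trans hu.2 hb⟩).continuousWithinAt).mono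
      (fun v hv => ⟨le_trans ha hv.1, le_trans hv.2 hb⟩)
  have hdiff : ∀ ξ ∈ Set.Ioo a b, HasDerivAt h (h' ξ) ξ := by
    intro ξ hξ
    have hmem : Set.Icc (0:ℝ) 1 ∈ nhds ξ :=
      Icc_mem_nhds (lt_of_le_of_lt ha hξ.1) (lt_of_lt_of_le hξ.2 hb)
    exact (hderiv ξ ⟨le_trans ha hξ.1.le, le_trans hξ.2.le hb⟩).hasDerivAt hmem
  obtain ⟨ξ, hξ, hslope⟩ := exists_hasDerivAt_eq_slope h h' hlt hcont hdiff
  have h1 : h b - h a = h' ξ * (b - a) := by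
    rw [hslope, div_mul_cancel₀ _ (by linarith : b - a ≠ 0)]
  rw [h1, ← sub_mul, abs_mul, abs_of_nonneg (by linarith : (0:ℝ) ≤ b - a)]
  exact mul_le_mul_of_nonneg_right (hc ξ hξ) (by linarith)

lemma add_rpow_le_two_rpow {p u v : ℝ} (hp : 0 ≤ p) (hu : 0 ≤ u) (hv : 0 ≤ v) :
    (u + v) ^ p ≤ 2 ^ p * (u ^ p + v ^ p) := by
  have h1 : u + v ≤ 2 * max u v := by
    rcases le_total u v with h | h
    · rw [max_eq_right h]; linarith
    · rw [max_eq_left h]; linarith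
  calc (u + v) ^ p ≤ (2 * max u v) ^ p :=
        Real.rpow_le_rpow (by linarith) h1 hp
    _ = 2 ^ p * (max u v) ^ p := Real.mul_rpow (by norm_num) (le_max_of_le_left hu)
    _ ≤ 2 ^ p * (u ^ p + v ^ p) := by
        apply mul_le_mul_of_nonneg_left _ (Real.rpow_nonneg (by norm_num) _)
        rcases le_total u v with h | h
        · rw [max_eq_right h]
          have := Real.rpow_nonneg hu p; linarith
        · rw [max_eq_left h]
          have := Real.rpow_nonneg hv p; linarith

set_option maxHeartbeats 2000000 in
/-- given a (1/p)-Hölder path `x` with linear dyadic p-th variation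
`C_p·t`, and `h ∈ C¹` non-decreasing with `h(0)=0` such that `g := (h'/C_p)^{1/p}` has
vanishing dyadic p-th variation, the path `y := g·x` satisfies `[y]^{(p)}_𝕋(t) = h(t)`. -/
theorem stmt4 (p Cp : ℝ) (hp : 1 < p) (hCp : 0 < Cp)
    (x : ℝ → ℝ)
    (hxHolder : ∃ C : ℝ, ∀ s ∈ Set.Icc (0 : ℝ) 1, ∀ t ∈ Set.Icc (0 : ℝ) 1,
      |x t - x s| ≤ C * |t - s| ^ (1 / p))
    (hxvar : ∀ t ∈ Set.Icc (0 : ℝ) 1,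
      Filter.Tendsto (fun n => dyadicPVar p x n t) Filter.atTop (nhds (Cp * t)))
    (h h' : ℝ → ℝ)
    (hderiv : ∀ t ∈ Set.Icc (0 : ℝ) 1, HasDerivWithinAt h (h' t) (Set.Icc 0 1) t)
    (hh'cont : ContinuousOn h' (Set.Icc 0 1))
    (hmono : MonotoneOn h (Set.Icc 0 1)) (hh0 : h 0 = 0)
    (hgvar : ∀ t ∈ Set.Icc (0 : ℝ) 1,
      Filter.Tendsto (fun n => dyadicPVar p (fun u => (h' u / Cp) ^ (1 / p)) n t)
        Filter.atTop (nhds 0)) :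
    ∀ t ∈ Set.Icc (0 : ℝ) 1,
      Filter.Tendsto
        (fun n => dyadicPVar p (fun u => (h' u / Cp) ^ (1 / p) * x u) n t)
        Filter.atTop (nhds (h t)) := by
  obtain ⟨C, hC⟩ := hxHolder
  intro t ht
  have hp0 : (0:ℝ) < p := lt_trans one_pos hp
  have hp1 : (1:ℝ) ≤ p := hp.le
  have hpne : p ≠ 0 := ne_of_gt hp0
  set g : ℝ → ℝ := fun u => (h' u / Cp) ^ (1 / p) with hgdef
  set σ : ℕ → ℕ → ℝ := fun n j => min ((j:ℝ)/2^n) t with hσdef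
  have hσmem : ∀ n j, σ n j ∈ Set.Icc (0:ℝ) 1 := fun n j =>
    ⟨le_min (by positivity) ht.1, le_trans (min_le_right _ _) ht.2⟩
  have F2 : ∀ (f : ℝ → ℝ) (n : ℕ), dyadicPVar p f n t
      = ∑ j ∈ Finset.range (2^n), |f (σ n (j+1)) - f (σ n j)| ^ p := by
    intro f n
    unfold dyadicPVar
    refine Finset.sum_congr rfl fun j _ => ?_
    have hc : ((j:ℝ) + 1) = ((j+1 : ℕ) : ℝ) := by push_cast; ring
    rw [hσdef]
    simp only []
    rw [hc]
  set w : ℕ → ℕ → ℝ := fun n j => |x (σ n (j+1)) - x (σ n j)| ^ p with hwdef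
  have hwnn : ∀ n j, 0 ≤ w n j := fun n j => Real.rpow_nonneg (abs_nonneg _) _
  have h'nn : ∀ u ∈ Set.Icc (0:ℝ) 1, 0 ≤ h' u := fun u hu =>
    deriv_nonneg_of_monotoneOn hmono hu (hderiv u hu)
  have hgnn : ∀ u ∈ Set.Icc (0:ℝ) 1, 0 ≤ g u := fun u hu =>
    Real.rpow_nonneg (div_nonneg (h'nn u hu) hCp.le) _
  have hgp : ∀ u ∈ Set.Icc (0:ℝ) 1, (g u) ^ p = h' u / Cp := by
    intro u hu
    rw [hgdef]
    simp only []
    rw [← Real.rpow_mul (div_nonneg (h'nn u hu) hCp.le), one_div,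
      inv_mul_cancel₀ hpne, Real.rpow_one]
  set A : ℕ → ℝ := fun n => ∑ j ∈ Finset.range (2^n), h' (σ n j) / Cp * w n j with hAdef
  have hAeq : ∀ n, ∑ j ∈ Finset.range (2^n),
      |g (σ n j) * (x (σ n (j+1)) - x (σ n j))| ^ p = A n := by
    intro n
    refine Finset.sum_congr rfl fun j _ => ?_
    rw [abs_mul, Real.mul_rpow (abs_nonneg _) (abs_nonneg _),
      abs_of_nonneg (hgnn _ (hσmem n j)), hgp _ (hσmem n j)]
  obtain ⟨K, hK⟩ := isCompact_Icc.exists_bound_of_continuousOn hh'cont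
  have hK0 : 0 ≤ K := le_trans (norm_nonneg _) (hK 0 ⟨le_refl 0, zero_le_one⟩)
  have hKabs : ∀ u ∈ Set.Icc (0:ℝ) 1, |h' u| ≤ K := by
    intro u hu; have := hK u hu; rwa [Real.norm_eq_abs] at this
  have hVbound : ∀ᶠ n in Filter.atTop, dyadicPVar p x n t ≤ Cp + 1 := by
    have h1 : Cp * t < Cp + 1 := by nlinarith [ht.2, ht.1]
    exact (hxvar t ht).eventually (eventually_le_nhds h1)
  have hAbound : ∀ n, A n ≤ K / Cp * dyadicPVar p x n t := by
    intro n
    rw [F2 x n, hAdef, Finset.mul_sum]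
    refine Finset.sum_le_sum fun j _ => ?_
    refine mul_le_mul_of_nonneg_right ?_ (hwnn n j)
    apply div_le_div_of_nonneg_right _ hCp.le
    exact le_trans (le_abs_self _) (hKabs _ (hσmem n j))
  have T1 : Filter.Tendsto A Filter.atTop (nhds (h t)) := by
    have hwb : ∀ n j : ℕ,
        |x (min (((j:ℝ)+1)/2^n) t) - x (min ((j:ℝ)/2^n) t)| ^ p = w n j := by
      intro n j
      have hc : ((j:ℝ)+1) = ((j+1:ℕ):ℝ) := by push_cast; ring
      rw [hc]
    have hVnn : ∀ n, 0 ≤ dyadicPVar p x n t := by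
      intro n
      rw [F2 x n]
      exact Finset.sum_nonneg fun j _ => Real.rpow_nonneg (abs_nonneg _) _
    rw [Metric.tendsto_atTop]
    intro ε hε
    set ε' : ℝ := ε * Cp / (3 * (Cp + 1)) with hε'def
    have hε'pos : 0 < ε' := by rw [hε'def]; positivity
    have hCpne : Cp ≠ 0 := hCp.ne'
    have hCp1ne : Cp + 1 ≠ 0 := by linarith
    have hε'eq : ε' / Cp * (Cp + 1) = ε / 3 := by
      rw [hε'def]
      field_simp
    have hε'le : ε' ≤ ε / 3 := by
      have h9 : ε' / Cp * (Cp + 1) = ε' + ε' / Cp := by field_simp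
      have h10 : 0 ≤ ε' / Cp := (div_pos hε'pos hCp).le
      linarith [hε'eq.symm.trans h9]
    obtain ⟨δ, hδpos, hδ⟩ := Metric.uniformContinuousOn_iff.1
      (isCompact_Icc.uniformContinuousOn_of_continuous hh'cont) ε' hε'pos
    obtain ⟨m, hm⟩ := exists_pow_lt_of_lt_one hδpos (by norm_num : (1:ℝ)/2 < 1)
    have h2m : (0:ℝ) < 2^m := by positivity
    set av : ℕ → ℝ := fun k => min ((k:ℝ)/2^m) t with havdef
    have havmem : ∀ k, av k ∈ Set.Icc (0:ℝ) 1 := fun k =>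
      ⟨le_min (by positivity) ht.1, le_trans (min_le_right _ _) ht.2⟩
    have hcmem : ∀ k : ℕ, k ≤ 2^m → ((k:ℝ)/2^m) ∈ Set.Icc (0:ℝ) 1 := by
      intro k hk
      have hkr : (k:ℝ) ≤ ((2^m : ℕ) : ℝ) := Nat.cast_le.2 hk
      push_cast at hkr
      constructor
      · positivity
      · rw [div_le_one h2m]; exact hkr
    have havmono : ∀ k : ℕ, av k ≤ av (k+1) := by
      intro k
      apply min_le_min _ (le_refl t)
      apply div_le_div_of_nonneg_right _ h2m.le
      push_cast
      linarith
    have hav0 : av 0 = 0 := by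
      show min (((0:ℕ):ℝ)/2^m) t = 0
      have he : ((0:ℕ):ℝ)/2^m = 0 := by norm_num
      rw [he]
      exact min_eq_left ht.1
    have havtop : av (2^m) = t := by
      show min (((2^m:ℕ):ℝ)/2^m) t = t
      have he : ((2^m : ℕ):ℝ)/2^m = 1 := by push_cast; field_simp
      rw [he]
      exact min_eq_right ht.2
    set R : ℕ → ℝ := fun n => ∑ k ∈ Finset.range (2^m),
      h' ((k:ℝ)/2^m) / Cp * (dyadicPVar p x n (av (k+1)) - dyadicPVar p x n (av k)) with hRdef
    set Rinf : ℝ := ∑ k ∈ Finset.range (2^m), h' ((k:ℝ)/2^m) * (av (k+1) - av k) with hRinfdef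
    have hRconv : Filter.Tendsto R Filter.atTop (nhds Rinf) := by
      have hlim : Rinf = ∑ k ∈ Finset.range (2^m),
          h' ((k:ℝ)/2^m) / Cp * (Cp * av (k+1) - Cp * av k) := by
        rw [hRinfdef]
        refine Finset.sum_congr rfl fun k _ => ?_
        field_simp
      rw [hlim, hRdef]
      apply tendsto_finset_sum
      intro k _
      exact ((hxvar (av (k+1)) (havmem _)).sub (hxvar (av k) (havmem _))).const_mul _
    have hRinf_close : |Rinf - h t| ≤ ε' := by
      have htel : h t = ∑ k ∈ Finset.range (2^m), (h (av (k+1)) - h (av k)) := by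
        rw [Finset.sum_range_sub (fun k => h (av k)), havtop, hav0, hh0, sub_zero]
      have hterm : ∀ k ∈ Finset.range (2^m),
          |h' ((k:ℝ)/2^m) * (av (k+1) - av k) - (h (av (k+1)) - h (av k))|
            ≤ ε' * (av (k+1) - av k) := by
        intro k hk
        have hk2 : k < 2^m := Finset.mem_range.1 hk
        have h1 : |h (av (k+1)) - h (av k) - h' ((k:ℝ)/2^m) * (av (k+1) - av k)|
            ≤ ε' * (av (k+1) - av k) := by
          apply block_mvt hderiv (havmem k).1 (havmono k) (havmem (k+1)).2
          intro ξ hξ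
          have hltk : (k:ℝ)/2^m < t := by
            by_contra hcon
            push_neg at hcon
            have e1 : av k = t := min_eq_right hcon
            have e2 : av (k+1) = t := by
              apply min_eq_right
              refine hcon.trans ?_
              apply div_le_div_of_nonneg_right _ h2m.le
              push_cast
              linarith
            rw [e1, e2] at hξ
            exact absurd hξ.1 (not_lt.2 hξ.2.le)
          have havk : av k = (k:ℝ)/2^m := min_eq_left hltk.le
          have h3 : av (k+1) ≤ ((k:ℝ)+1)/2^m := by
            have : av (k+1) ≤ (((k+1):ℕ):ℝ)/2^m := min_le_left _ _
            push_cast at this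
            linarith
          have h4 : ((k:ℝ)+1)/2^m = (k:ℝ)/2^m + (1/2)^m := by
            rw [div_pow, one_pow]
            ring
          have hup : ξ < (k:ℝ)/2^m + (1/2)^m := by
            have := hξ.2
            linarith
          have hlow : (k:ℝ)/2^m < ξ := by rw [← havk]; exact hξ.1
          have hξmem : ξ ∈ Set.Icc (0:ℝ) 1 :=
            ⟨le_trans (havmem k).1 hξ.1.le, le_trans hξ.2.le (havmem (k+1)).2⟩
          have hdist : dist ξ ((k:ℝ)/2^m) < δ := by
            rw [Real.dist_eq, abs_of_pos (by linarith : (0:ℝ) < ξ - (k:ℝ)/2^m)]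
            linarith
          have h5 := hδ ξ hξmem ((k:ℝ)/2^m) (hcmem k hk2.le) hdist
          rw [Real.dist_eq] at h5
          exact h5.le
        calc |h' ((k:ℝ)/2^m) * (av (k+1) - av k) - (h (av (k+1)) - h (av k))|
            = |h (av (k+1)) - h (av k) - h' ((k:ℝ)/2^m) * (av (k+1) - av k)| := by
              rw [abs_sub_comm]
          _ ≤ ε' * (av (k+1) - av k) := h1
      rw [hRinfdef, htel, ← Finset.sum_sub_distrib]
      calc |∑ k ∈ Finset.range (2^m),
              (h' ((k:ℝ)/2^m) * (av (k+1) - av k) - (h (av (k+1)) - h (av k)))|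
          ≤ ∑ k ∈ Finset.range (2^m),
              |h' ((k:ℝ)/2^m) * (av (k+1) - av k) - (h (av (k+1)) - h (av k))| :=
            Finset.abs_sum_le_sum_abs _ _
        _ ≤ ∑ k ∈ Finset.range (2^m), ε' * (av (k+1) - av k) := Finset.sum_le_sum hterm
        _ = ε' * (av (2^m) - av 0) := by
            rw [← Finset.mul_sum, Finset.sum_range_sub (fun k => av k)]
        _ = ε' * t := by rw [havtop, hav0, sub_zero]
        _ ≤ ε' := by nlinarith [ht.2, hε'pos.le]
    have hcomp : ∀ n, m ≤ n → |A n - R n| ≤ ε' / Cp * dyadicPVar p x n t := by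
      intro n hmn
      have h2n : (2:ℕ)^n = 2^m * 2^(n-m) := by rw [← pow_add]; congr 1; omega
      set L : ℕ := 2^(n-m) with hLdef
      have hLpos : 0 < L := by rw [hLdef]; positivity
      have h2nr : (2:ℝ)^n = 2^m * (L:ℝ) := by
        rw [hLdef]
        push_cast
        rw [← pow_add]
        congr 1
        omega
      have hVsplit : ∀ k : ℕ, k ≤ 2^m →
          dyadicPVar p x n (av k) = ∑ j ∈ Finset.range (k * L), w n j := by
        intro k hk
        have he := dyadicPVar_min_eq p hp0 x (t := t) hmn hk
        show dyadicPVar p x n (min ((k:ℝ)/2^m) t) = _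
        rw [he]
        exact Finset.sum_congr rfl fun j _ => hwb n j
      have hRn : R n = ∑ k ∈ Finset.range (2^m), ∑ r ∈ Finset.range L,
          h' ((k:ℝ)/2^m) / Cp * w n (k*L + r) := by
        rw [hRdef]
        refine Finset.sum_congr rfl fun k hk => ?_
        have hk2 : k < 2^m := Finset.mem_range.1 hk
        rw [hVsplit k hk2.le, hVsplit (k+1) (Nat.succ_le_of_lt hk2)]
        rw [show (k+1) * L = k*L + L by ring, Finset.sum_range_add, add_sub_cancel_left,
          Finset.mul_sum]
      have hAn : A n = ∑ k ∈ Finset.range (2^m), ∑ r ∈ Finset.range L,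
          h' (σ n (k*L+r)) / Cp * w n (k*L+r) := by
        have he : A n = ∑ j ∈ Finset.range (2^m * L), h' (σ n j)/Cp * w n j := by
          show (∑ j ∈ Finset.range (2^n), h' (σ n j)/Cp * w n j) = _
          rw [h2n]
        rw [he]
        exact sum_range_mul_sum _ _ _
      have hVt : dyadicPVar p x n t = ∑ k ∈ Finset.range (2^m), ∑ r ∈ Finset.range L,
          w n (k*L+r) := by
        rw [F2 x n, h2n]
        exact sum_range_mul_sum _ _ _
      rw [hAn, hRn, hVt, ← Finset.sum_sub_distrib, Finset.mul_sum]
      refine le_trans (Finset.abs_sum_le_sum_abs _ _) (Finset.sum_le_sum fun k hk => ?_)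
      rw [← Finset.sum_sub_distrib, Finset.mul_sum]
      refine le_trans (Finset.abs_sum_le_sum_abs _ _) (Finset.sum_le_sum fun r hr => ?_)
      have hk2 : k < 2^m := Finset.mem_range.1 hk
      have hr2 : r < L := Finset.mem_range.1 hr
      set j : ℕ := k*L + r with hjdef
      by_cases hts : t ≤ (j:ℝ)/2^n
      · have e1 : σ n j = t := min_eq_right hts
        have e2 : σ n (j+1) = t := by
          apply min_eq_right
          refine hts.trans ?_
          apply div_le_div_of_nonneg_right _ (by positivity : (0:ℝ) ≤ 2^n)
          push_cast
          linarith
        have hw0 : w n j = 0 := by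
          show |x (σ n (j+1)) - x (σ n j)| ^ p = 0
          rw [e1, e2, sub_self, abs_zero, Real.zero_rpow hpne]
        rw [hw0]
        simp
      · push_neg at hts
        have hσj : σ n j = (j:ℝ)/2^n := min_eq_left hts.le
        rw [← sub_mul, abs_mul, abs_of_nonneg (hwnn _ _)]
        refine mul_le_mul_of_nonneg_right ?_ (hwnn _ _)
        rw [div_sub_div_same, abs_div, abs_of_pos hCp]
        apply div_le_div_of_nonneg_right _ hCp.le
        have hj1 : (k:ℝ)/2^m ≤ (j:ℝ)/2^n := by
          rw [div_le_div_iff₀ h2m (by positivity), h2nr, hjdef]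
          push_cast
          have hL0 : (0:ℝ) ≤ (L:ℝ) := Nat.cast_nonneg _
          have hr0 : (0:ℝ) ≤ (r:ℝ) := Nat.cast_nonneg _
          nlinarith [h2m]
        have hj2 : (j:ℝ)/2^n < ((k:ℝ)+1)/2^m := by
          rw [div_lt_div_iff₀ (by positivity) h2m, h2nr, hjdef]
          push_cast
          have hrL : (r:ℝ) < (L:ℝ) := Nat.cast_lt.2 hr2
          have hk0 : (0:ℝ) ≤ (k:ℝ) := Nat.cast_nonneg _
          nlinarith [h2m]
        have h4 : ((k:ℝ)+1)/2^m = (k:ℝ)/2^m + (1/2)^m := by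
          rw [div_pow, one_pow]
          ring
        have hdist : dist (σ n j) ((k:ℝ)/2^m) < δ := by
          rw [Real.dist_eq, hσj,
            abs_of_nonneg (by linarith : (0:ℝ) ≤ (j:ℝ)/2^n - (k:ℝ)/2^m)]
          have := hj2
          rw [h4] at this
          linarith
        have h5 := hδ (σ n j) (hσmem n j) ((k:ℝ)/2^m) (hcmem k hk2.le) hdist
        rw [Real.dist_eq] at h5
        exact h5.le
    have hR3 : ∀ᶠ n in Filter.atTop, |R n - Rinf| < ε/3 := by
      obtain ⟨N, hN⟩ := Metric.tendsto_atTop.1 hRconv (ε/3) (by linarith)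
      rw [Filter.eventually_atTop]
      exact ⟨N, fun n hn => by have := hN n hn; rwa [Real.dist_eq] at this⟩
    have hfin : ∀ᶠ n in Filter.atTop, dist (A n) (h t) < ε := by
      filter_upwards [hR3, hVbound, Filter.eventually_ge_atTop m] with n h1 h2 h3
      have hAR := hcomp n h3
      have hstep : ε'/Cp * dyadicPVar p x n t ≤ ε/3 := by
        rw [← hε'eq]
        exact mul_le_mul_of_nonneg_left h2 (div_pos hε'pos hCp).le
      rw [Real.dist_eq]
      have d1 := abs_sub_le (A n) (R n) (h t)
      have d2 := abs_sub_le (R n) Rinf (h t)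
      linarith [hRinf_close]
    rw [Filter.eventually_atTop] at hfin
    exact hfin
  have T2 : Filter.Tendsto (fun n =>
      dyadicPVar p (fun u => g u * x u) n t - A n) Filter.atTop (nhds 0) := by
    set M : ℝ := |x 0| + max C 0 with hMdef
    have hM0 : 0 ≤ M := add_nonneg (abs_nonneg _) (le_max_right _ _)
    have hMx : ∀ u ∈ Set.Icc (0:ℝ) 1, |x u| ≤ M := by
      intro u hu
      have h1 := hC 0 ⟨le_refl 0, zero_le_one⟩ u hu
      have h2 : C * |u - 0| ^ (1/p) ≤ max C 0 := by
        rcases le_total C 0 with hC0 | hC0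
        · have h3 : (0:ℝ) ≤ |u - 0| ^ (1/p) := Real.rpow_nonneg (abs_nonneg _) _
          calc C * |u-0|^(1/p) ≤ 0 := mul_nonpos_of_nonpos_of_nonneg hC0 h3
            _ ≤ max C 0 := le_max_right _ _
        · have h5 : |u - 0| ^ (1/p) ≤ 1 := by
            apply Real.rpow_le_one (abs_nonneg _) _ (by positivity)
            rw [sub_zero, abs_of_nonneg hu.1]; exact hu.2
          have h6 : C * |u-0|^(1/p) ≤ C * 1 := mul_le_mul_of_nonneg_left h5 hC0
          have h7 : C * 1 ≤ max C 0 := by rw [mul_one]; exact le_max_left _ _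
          linarith
      have h4 : |x u| ≤ |x 0| + |x u - x 0| := by
        calc |x u| = |x 0 + (x u - x 0)| := by ring_nf
          _ ≤ |x 0| + |x u - x 0| := abs_add_le _ _
      rw [hMdef]; linarith
    set B : ℕ → ℝ := fun n => dyadicPVar p g n t with hBdef
    have hB : Filter.Tendsto B Filter.atTop (nhds 0) := hgvar t ht
    have hBnn : ∀ n, 0 ≤ B n := by
      intro n
      show 0 ≤ dyadicPVar p g n t
      rw [F2 g n]
      exact Finset.sum_nonneg fun j _ => Real.rpow_nonneg (abs_nonneg _) _
    set q : ℝ := p / (p - 1) with hqdef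
    have hq : q.HolderConjugate p := (Real.HolderConjugate.conjExponent hp).symm
    have hqpos : 0 < q := by rw [hqdef]; apply div_pos hp0; linarith
    have hq0 : 0 < 1/q := by positivity
    set Q : ℝ := K / Cp * (Cp + 1) with hQdef
    have hQ0 : 0 ≤ Q := by positivity
    have key : ∀ᶠ n in Filter.atTop,
        |dyadicPVar p (fun u => g u * x u) n t - A n|
          ≤ p * (2^p * (Q + M^p * B n)) ^ (1/q) * (M^p * B n) ^ (1/p) := by
      filter_upwards [hVbound] with n hVn
      set F : ℕ → ℝ := fun j => g (σ n j) * (x (σ n (j+1)) - x (σ n j)) with hFdef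
      set G : ℕ → ℝ := fun j => x (σ n (j+1)) * (g (σ n (j+1)) - g (σ n j)) with hGdef
      have hS : dyadicPVar p (fun u => g u * x u) n t
          = ∑ j ∈ Finset.range (2^n), |F j + G j| ^ p := by
        rw [F2 (fun u => g u * x u) n]
        refine Finset.sum_congr rfl fun j _ => ?_
        simp only [hFdef, hGdef]
        congr 2
        ring
      have hAF : ∑ j ∈ Finset.range (2^n), |F j|^p = A n := by
        simp only [hFdef]
        exact hAeq n
      have hGb : ∀ j, |G j|^p ≤ M^p * |g (σ n (j+1)) - g (σ n j)|^p := by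
        intro j
        simp only [hGdef]
        rw [abs_mul, Real.mul_rpow (abs_nonneg _) (abs_nonneg _)]
        exact mul_le_mul_of_nonneg_right
          (Real.rpow_le_rpow (abs_nonneg _) (hMx _ (hσmem n (j+1))) hp0.le)
          (Real.rpow_nonneg (abs_nonneg _) _)
      have hsumG : ∑ j ∈ Finset.range (2^n), |G j|^p ≤ M^p * B n := by
        have hBn : B n = ∑ j ∈ Finset.range (2^n), |g (σ n (j+1)) - g (σ n j)|^p := by
          rw [hBdef]; exact F2 g n
        rw [hBn, Finset.mul_sum]
        exact Finset.sum_le_sum fun j _ => hGb j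
      have hsumGnn : 0 ≤ ∑ j ∈ Finset.range (2^n), |G j|^p :=
        Finset.sum_nonneg fun j _ => Real.rpow_nonneg (abs_nonneg _) _
      have hsumF : ∑ j ∈ Finset.range (2^n), |F j|^p ≤ Q := by
        rw [hAF]
        calc A n ≤ K/Cp * dyadicPVar p x n t := hAbound n
          _ ≤ K/Cp * (Cp + 1) := mul_le_mul_of_nonneg_left hVn (by positivity)
      have hsumFG : ∑ j ∈ Finset.range (2^n), (|F j| + |G j|)^p ≤ 2^p * (Q + M^p * B n) := by
        calc ∑ j ∈ Finset.range (2^n), (|F j| + |G j|)^p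
            ≤ ∑ j ∈ Finset.range (2^n), 2^p * (|F j|^p + |G j|^p) :=
              Finset.sum_le_sum fun j _ => add_rpow_le_two_rpow hp0.le (abs_nonneg _) (abs_nonneg _)
          _ = 2^p * (∑ j ∈ Finset.range (2^n), |F j|^p + ∑ j ∈ Finset.range (2^n), |G j|^p) := by
              rw [← Finset.sum_add_distrib, Finset.mul_sum]
          _ ≤ 2^p * (Q + M^p * B n) := by
              apply mul_le_mul_of_nonneg_left _ (Real.rpow_nonneg (by norm_num) _)
              linarith
      have hsumFGnn : 0 ≤ ∑ j ∈ Finset.range (2^n), (|F j| + |G j|)^p :=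
        Finset.sum_nonneg fun j _ => Real.rpow_nonneg (by positivity) _
      rw [hS, ← hAF, ← Finset.sum_sub_distrib]
      have hpq : (p-1) * q = p := by
        have h9 : p - 1 ≠ 0 := by linarith
        rw [hqdef]
        field_simp
      have e1 : ∀ j : ℕ, |(|F j| + |G j|)^(p-1)|^q = (|F j| + |G j|)^p := by
        intro j
        rw [abs_of_nonneg (Real.rpow_nonneg (by positivity) _),
          ← Real.rpow_mul (by positivity), hpq]
      have e2 : ∀ j : ℕ, |(|G j|)| ^ p = |G j| ^ p := fun j => by rw [abs_abs]
      calc |∑ j ∈ Finset.range (2^n), (|F j + G j|^p - |F j|^p)|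
          ≤ ∑ j ∈ Finset.range (2^n), |(|F j + G j|^p - |F j|^p)| :=
            Finset.abs_sum_le_sum_abs _ _
        _ ≤ ∑ j ∈ Finset.range (2^n), p * ((|F j| + |G j|)^(p-1) * |G j|) := by
            refine Finset.sum_le_sum fun j _ => ?_
            rw [← mul_assoc]
            exact abs_rpow_sub_abs_rpow_le hp1 _ _
        _ = p * ∑ j ∈ Finset.range (2^n), (|F j| + |G j|)^(p-1) * |G j| := by
            rw [Finset.mul_sum]
        _ ≤ p * ((∑ j ∈ Finset.range (2^n), |(|F j| + |G j|)^(p-1)|^q)^(1/q)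
              * (∑ j ∈ Finset.range (2^n), |(|G j|)| ^ p)^(1/p)) :=
            mul_le_mul_of_nonneg_left (Real.inner_le_Lp_mul_Lq _ _ _ hq) hp0.le
        _ ≤ p * (2^p * (Q + M^p * B n))^(1/q) * (M^p * B n)^(1/p) := by
            simp only [e1, e2]
            rw [mul_assoc]
            apply mul_le_mul_of_nonneg_left _ hp0.le
            apply mul_le_mul
            · exact Real.rpow_le_rpow hsumFGnn hsumFG hq0.le
            · exact Real.rpow_le_rpow hsumGnn hsumG (by positivity)
            · exact Real.rpow_nonneg hsumGnn _
            · exact Real.rpow_nonneg (mul_nonneg (Real.rpow_nonneg (by norm_num) _)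
                (add_nonneg hQ0 (mul_nonneg (Real.rpow_nonneg hM0 _) (hBnn n)))) _
    have hRHS : Filter.Tendsto (fun n => p * (2^p * (Q + M^p * B n))^(1/q) * (M^p * B n)^(1/p))
        Filter.atTop (nhds 0) := by
      have h1 : Filter.Tendsto (fun n => M^p * B n) Filter.atTop (nhds 0) := by
        have := hB.const_mul (M^p)
        simpa using this
      have h2 : Filter.Tendsto (fun n => (M^p * B n)^(1/p)) Filter.atTop (nhds 0) := by
        have hc := (Real.continuousAt_rpow_const 0 (1/p) (Or.inr (by positivity))).tendsto
        have h3 := hc.comp h1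
        have h0 : ((0:ℝ))^(1/p) = 0 := Real.zero_rpow (by positivity : (0:ℝ) < 1/p).ne'
        rw [h0] at h3
        exact h3
      have h4 : Filter.Tendsto (fun n => 2^p * (Q + M^p * B n)) Filter.atTop
          (nhds (2^p * (Q + 0))) :=
        (Filter.Tendsto.const_add Q h1).const_mul _
      have h5 : Filter.Tendsto (fun n => (2^p * (Q + M^p * B n))^(1/q)) Filter.atTop
          (nhds ((2^p * (Q + 0))^(1/q))) := by
        have hc := (Real.continuousAt_rpow_const (2^p * (Q + 0)) (1/q) (Or.inr hq0.le)).tendsto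
        exact hc.comp h4
      have h6 := (h5.const_mul p).mul h2
      simpa using h6
    have habs : Filter.Tendsto (fun n => |dyadicPVar p (fun u => g u * x u) n t - A n|)
        Filter.atTop (nhds 0) :=
      squeeze_zero' (Filter.Eventually.of_forall fun n => abs_nonneg _) key hRHS
    have hneg := habs.neg
    rw [neg_zero] at hneg
    exact tendsto_of_tendsto_of_tendsto_of_le_of_le hneg habs
      (fun n => neg_abs_le _) (fun n => le_abs_self _)
  have T3 := T2.add T1
  rw [zero_add] at T3
  have heq : (fun n => dyadicPVar p (fun u => g u * x u) n t - A n + A n)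
      = fun n => dyadicPVar p (fun u => g u * x u) n t := by
    funext n; ring
  rw [heq] at T3
  exact T3
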